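/- Let G be a connected graph with maximum degree 3 in which every vertex has degree 3 except exactly one vertex of degree 2, and suppose the longest induced path starting at the degree-2 vertex and otherwise using only degree-3 vertices has ℓ edges, while the longest induced path using only degree-3 vertices has m edges. Then t(G) = max(ℓ + 1, ⌊m/2⌋ + 1). -/

import Mathlib

open SimpleGraph

/-- One round of 2-neighbor bootstrap percolation: add every vertex with
at least two (distinct) infected neighbors. -/
def infectStep {V : Type} (G : SimpleGraph V) (S : Set V) : Set V :=
  S ∪ {v | ∃ u w, u ≠ w ∧ G.Adj v u ∧ G.Adj v w ∧ u ∈ S ∧ w ∈ S}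

/-- The infected set after `n` rounds starting from `S`. -/
def stage {V : Type} (G : SimpleGraph V) (S : Set V) : ℕ → Set V
  | 0 => S
  | n + 1 => infectStep G (stage G S n)

/-- `S` percolates: eventually every vertex is infected. -/
def Percolates {V : Type} (G : SimpleGraph V) (S : Set V) : Prop :=
  ∃ t, stage G S t = Set.univ

/-- The infection time of `v` (`⊤` if `v` is never infected). -/
noncomputable def infTime {V : Type} (G : SimpleGraph V) (S : Set V) (v : V) : ℕ∞ :=
  sInf {n : ℕ∞ | ∃ i : ℕ, n = (i : ℕ∞) ∧ v ∈ stage G S i}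

/-- The percolation time of a percolating set `S`. -/
noncomputable def percTime {V : Type} (G : SimpleGraph V) (S : Set V) : ℕ :=
  sInf {t | stage G S t = Set.univ}

/-- The maximum percolation time `t(G)`. -/
noncomputable def maxTime {V : Type} (G : SimpleGraph V) : ℕ :=
  sSup {t | ∃ S : Set V, Percolates G S ∧ percTime G S = t}

/-- `w` lists the vertices of an induced (chordless) path in `G`. -/
def IsInducedPath {V : Type} (G : SimpleGraph V) {n : ℕ} (w : Fin (n + 1) → V) : Prop :=
  Function.Injective w ∧
    ∀ i j : Fin (n + 1), G.Adj (w i) (w j) ↔ (i.1 + 1 = j.1 ∨ j.1 + 1 = i.1)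

namespace BP
section Basics
variable {V : Type} (G : SimpleGraph V) (S : Set V)

lemma stage_subset_succ (n : ℕ) : stage G S n ⊆ stage G S (n+1) :=
  Set.subset_union_left

lemma stage_mono : Monotone (stage G S) :=
  monotone_nat_of_le_succ (stage_subset_succ G S)

/-- first infection time -/
noncomputable def tau (u : V) : ℕ := sInf {n | u ∈ stage G S n}

variable {G S} {N : ℕ} (hP : stage G S N = Set.univ)

include hP

lemma tau_nonempty (u : V) : {n | u ∈ stage G S n}.Nonempty :=
  ⟨N, by simp [hP]⟩

lemma mem_stage_iff {u : V} {r : ℕ} : u ∈ stage G S r ↔ tau G S u ≤ r := by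
  constructor
  · intro h; exact Nat.sInf_le h
  · intro h
    exact stage_mono G S h (Nat.sInf_mem (tau_nonempty hP u))

lemma tau_le_N (u : V) : tau G S u ≤ N :=
  (mem_stage_iff hP).1 (by simp [hP])

lemma exists_causes {u : V} {r : ℕ} (hr : tau G S u = r + 1) :
    ∃ a b, a ≠ b ∧ G.Adj u a ∧ G.Adj u b ∧ tau G S a ≤ r ∧ tau G S b ≤ r := by
  have hmem : u ∈ stage G S (r+1) := (mem_stage_iff hP).2 (le_of_eq hr)
  have hnot : u ∉ stage G S r := by
    rw [mem_stage_iff hP, hr]; omega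
  rcases hmem with h | ⟨a, b, hab, ha, hb, haS, hbS⟩
  · exact absurd h hnot
  · exact ⟨a, b, hab, ha, hb, (mem_stage_iff hP).1 haS, (mem_stage_iff hP).1 hbS⟩

lemma tau_le_of_two {u a b : V} {r : ℕ} (hab : a ≠ b) (ha : G.Adj u a) (hb : G.Adj u b)
    (hta : tau G S a ≤ r) (htb : tau G S b ≤ r) : tau G S u ≤ r + 1 := by
  have : u ∈ stage G S (r+1) :=
    Or.inr ⟨a, b, hab, ha, hb, (mem_stage_iff hP).2 hta, (mem_stage_iff hP).2 htb⟩
  exact (mem_stage_iff hP).1 this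

/-- a vertex with two neighbors infected no earlier than itself has degree ≥ 4 -/
lemma four_le_degree [Fintype V] [DecidableEq V] [DecidableRel G.Adj]
    {u a b : V} (hu : 1 ≤ tau G S u) (ha : G.Adj u a) (hb : G.Adj u b) (hab : a ≠ b)
    (hta : tau G S u ≤ tau G S a) (htb : tau G S u ≤ tau G S b) : 4 ≤ G.degree u := by
  obtain ⟨r, hr⟩ : ∃ r, tau G S u = r + 1 := ⟨tau G S u - 1, by omega⟩
  obtain ⟨c, d, hcd, hc, hd, htc, htd⟩ := exists_causes hP hr
  have hca : c ≠ a := fun h => by subst h; omega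
  have hcb : c ≠ b := fun h => by subst h; omega
  have hda : d ≠ a := fun h => by subst h; omega
  have hdb : d ≠ b := fun h => by subst h; omega
  have hsub : ({a, b, c, d} : Finset V) ⊆ G.neighborFinset u := by
    intro x hx
    simp only [Finset.mem_insert, Finset.mem_singleton] at hx
    rcases hx with rfl | rfl | rfl | rfl <;> simp [mem_neighborFinset, ha, hb, hc, hd]
  have hcard : ({a, b, c, d} : Finset V).card = 4 := by
    rw [Finset.card_insert_of_notMem (by simp [hab, hca.symm, hda.symm]),
        Finset.card_insert_of_notMem (by simp [hcb.symm, hdb.symm]),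
        Finset.card_insert_of_notMem (by simp [hcd]), Finset.card_singleton]
  calc 4 = ({a, b, c, d} : Finset V).card := hcard.symm
    _ ≤ (G.neighborFinset u).card := Finset.card_le_card hsub
    _ = G.degree u := (G.card_neighborFinset_eq_degree u)

/-- a vertex with one neighbor infected no earlier than itself has degree ≥ 3 -/
lemma three_le_degree [Fintype V] [DecidableEq V] [DecidableRel G.Adj]
    {u a : V} (hu : 1 ≤ tau G S u) (ha : G.Adj u a)
    (hta : tau G S u ≤ tau G S a) : 3 ≤ G.degree u := by
  obtain ⟨r, hr⟩ : ∃ r, tau G S u = r + 1 := ⟨tau G S u - 1, by omega⟩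
  obtain ⟨c, d, hcd, hc, hd, htc, htd⟩ := exists_causes hP hr
  have hca : c ≠ a := fun h => by subst h; omega
  have hda : d ≠ a := fun h => by subst h; omega
  have hsub : ({a, c, d} : Finset V) ⊆ G.neighborFinset u := by
    intro x hx
    simp only [Finset.mem_insert, Finset.mem_singleton] at hx
    rcases hx with rfl | rfl | rfl <;> simp [mem_neighborFinset, ha, hc, hd]
  have hcard : ({a, c, d} : Finset V).card = 3 := by
    rw [Finset.card_insert_of_notMem (by simp [hca.symm, hda.symm]),
        Finset.card_insert_of_notMem (by simp [hcd]), Finset.card_singleton]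
  calc 3 = ({a, c, d} : Finset V).card := hcard.symm
    _ ≤ (G.neighborFinset u).card := Finset.card_le_card hsub
    _ = G.degree u := (G.card_neighborFinset_eq_degree u)

lemma exists_cause_exact {u : V} {r : ℕ} (hr : tau G S u = r + 1) :
    ∃ a, G.Adj u a ∧ tau G S a = r := by
  obtain ⟨a, b, hab, ha, hb, hta, htb⟩ := exists_causes hP hr
  by_cases h1 : tau G S a = r
  · exact ⟨a, ha, h1⟩
  by_cases h2 : tau G S b = r
  · exact ⟨b, hb, h2⟩
  · exfalso
    have hr1 : 1 ≤ r := by omega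
    have := tau_le_of_two hP hab ha hb (r := r - 1) (by omega) (by omega)
    omega

omit hP

/-- the canonical descent function -/
noncomputable def desc (G : SimpleGraph V) (S : Set V) (u : V) : V :=
  open scoped Classical in
  if h : ∃ a, G.Adj u a ∧ tau G S a + 1 = tau G S u then h.choose else u

include hP

lemma desc_spec {u : V} {r : ℕ} (hr : tau G S u = r + 1) :
    G.Adj u (desc G S u) ∧ tau G S (desc G S u) = r := by
  obtain ⟨a, ha, hta⟩ := exists_cause_exact hP hr
  have hex : ∃ a, G.Adj u a ∧ tau G S a + 1 = tau G S u := ⟨a, ha, by omega⟩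
  rw [desc, dif_pos hex]
  exact ⟨hex.choose_spec.1, by have := hex.choose_spec.2; omega⟩

omit hP

/-- descending chain from a vertex -/
noncomputable def chain (G : SimpleGraph V) (S : Set V) (top : V) : ℕ → V :=
  fun i => (desc G S)^[i] top

lemma chain_zero (top : V) : chain G S top 0 = top := rfl

lemma chain_succ (top : V) (i : ℕ) :
    chain G S top (i+1) = desc G S (chain G S top i) :=
  Function.iterate_succ_apply' _ _ _

include hP

lemma chain_tau {top : V} {r : ℕ} (htop : tau G S top = r) :
    ∀ i, i ≤ r → tau G S (chain G S top i) = r - i := by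
  intro i
  induction i with
  | zero => intro _; simpa [chain_zero] using htop
  | succ n ih =>
    intro hn
    have h1 : tau G S (chain G S top n) = r - n := ih (by omega)
    have h2 : tau G S (chain G S top n) = (r - n - 1) + 1 := by omega
    rw [chain_succ]
    have := (desc_spec hP h2).2
    omega

lemma chain_adj {top : V} {r : ℕ} (htop : tau G S top = r) :
    ∀ i, i + 1 ≤ r → G.Adj (chain G S top i) (chain G S top (i+1)) := by
  intro i hi
  have h1 : tau G S (chain G S top i) = r - i := chain_tau hP htop i (by omega)
  have h2 : tau G S (chain G S top i) = (r - i - 1) + 1 := by omega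
  rw [chain_succ]
  exact (desc_spec hP h2).1


end Basics

section Glue
variable {V : Type} [Fintype V] [DecidableEq V] {G : SimpleGraph V} [DecidableRel G.Adj]
  {S : Set V} {N : ℕ}

lemma not_two_high (hP : stage G S N = Set.univ) (hmax : ∀ v, G.degree v ≤ 3)
    {u a b : V} (hu : 1 ≤ tau G S u) (ha : G.Adj u a) (hb : G.Adj u b) (hab : a ≠ b)
    (hta : tau G S u ≤ tau G S a) (htb : tau G S u ≤ tau G S b) : False := by
  have := four_le_degree hP hu ha hb hab hta htb
  have := hmax u
  omega

lemma deg_three_of_high (hP : stage G S N = Set.univ) (hmax : ∀ v, G.degree v ≤ 3)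
    {u a : V} (hu : 1 ≤ tau G S u) (ha : G.Adj u a)
    (hta : tau G S u ≤ tau G S a) : G.degree u = 3 := by
  have := three_le_degree hP hu ha hta
  have := hmax u
  omega

lemma chains_disjoint (hP : stage G S N = Set.univ) (hmax : ∀ v, G.degree v ≤ 3)
    {F B : V} {K : ℕ} (hτF : tau G S F = K) (hτB : tau G S B = K) (hFB : F ≠ B) :
    ∀ j, j ≤ K - 1 → chain G S F j ≠ chain G S B j := by
  intro j
  induction j with
  | zero => intro _; simpa [chain_zero] using hFB
  | succ n ih =>
    intro hn heq
    have hK : n + 1 ≤ K - 1 := hn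
    have h1 : tau G S (chain G S F (n+1)) = K - (n+1) := chain_tau hP hτF (n+1) (by omega)
    have h2 : G.Adj (chain G S F n) (chain G S F (n+1)) := chain_adj hP hτF n (by omega)
    have h3 : G.Adj (chain G S B n) (chain G S B (n+1)) := chain_adj hP hτB n (by omega)
    have h4 : tau G S (chain G S F n) = K - n := chain_tau hP hτF n (by omega)
    have h5 : tau G S (chain G S B n) = K - n := chain_tau hP hτB n (by omega)
    have hne : chain G S F n ≠ chain G S B n := ih (by omega)
    rw [heq] at h2
    have h6 : tau G S (chain G S B (n+1)) = K - (n+1) := chain_tau hP hτB (n+1) (by omega)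
    exact not_two_high hP hmax (u := chain G S B (n+1)) (by omega) h2.symm h3.symm hne
      (by omega) (by omega)

/-- The glued path: left chain rising to the summit block, then right chain falling. -/
lemma glue (hP : stage G S N = Set.univ) (hmax : ∀ v, G.degree v ≤ 3)
    {K q : ℕ} (hK : 1 ≤ K) (hq : q ≤ 1) (mid : ℕ → V) (F B : V)
    (hmidτ : ∀ i ≤ q, tau G S (mid i) = K + 1)
    (hmidadj : q = 1 → G.Adj (mid 0) (mid 1))
    (hτF : tau G S F = K) (hτB : tau G S B = K) (hFB : F ≠ B)
    (hadjF : G.Adj (mid 0) F) (hadjB : G.Adj (mid q) B)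
    (hmiddeg : ∀ i ≤ q, G.degree (mid i) = 3) :
    (2*K + q) ∈ {n | ∃ w : Fin (n + 1) → V, IsInducedPath G w ∧
      ∀ i, G.degree (w i) = 3} := by
  classical
  set n := 2*K + q with hn
  -- the path as a function of natural-number position
  set body : ℕ → V := fun i =>
    if i < K then chain G S F (K - 1 - i)
    else if i ≤ K + q then mid (i - K)
    else chain G S B (i - K - q - 1) with hbody
  set tw : ℕ → ℕ := fun i =>
    if i < K then i + 1 else if i ≤ K + q then K + 1 else 2*K + q + 1 - i with htw
  have htau : ∀ i ≤ n, tau G S (body i) = tw i := by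
    intro i hi
    by_cases h1 : i < K
    · simp only [hbody, htw, if_pos h1]
      rw [chain_tau hP hτF (K - 1 - i) (by omega)]; omega
    · by_cases h2 : i ≤ K + q
      · simp only [hbody, htw, if_neg h1, if_pos h2]
        exact hmidτ (i - K) (by omega)
      · simp only [hbody, htw, if_neg h1, if_neg h2]
        rw [chain_tau hP hτB (i - K - q - 1) (by omega)]; omega
  have htw_pos : ∀ i ≤ n, 1 ≤ tw i := by
    intro i hi; simp only [htw]; split_ifs <;> omega
  -- consecutive adjacency
  have hadj : ∀ i, i + 1 ≤ n → G.Adj (body i) (body (i+1)) := by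
    intro i hi
    by_cases h1 : i + 1 < K
    · have e1 : body i = chain G S F (K - 1 - i) := by simp only [hbody]; rw [if_pos (show i < K by omega)]
      have e2 : body (i+1) = chain G S F (K - 1 - (i+1)) := by simp only [hbody]; rw [if_pos h1]
      rw [e1, e2]
      have : K - 1 - i = (K - 1 - (i+1)) + 1 := by omega
      rw [this]
      exact (chain_adj hP hτF (K - 1 - (i+1)) (by omega)).symm
    · by_cases h2 : i + 1 = K
      · have e1 : body i = chain G S F 0 := by
          simp only [hbody]; rw [if_pos (by omega : i < K)]
          congr 1; omega
        have e2 : body (i+1) = mid 0 := by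
          simp only [hbody]; rw [if_neg (by omega), if_pos (by omega)]
          congr 1; omega
        rw [e1, e2, chain_zero]
        exact hadjF.symm
      · by_cases h3 : i + 1 ≤ K + q
        · -- i = K, i+1 = K+1, q = 1
          have hq1 : q = 1 := by omega
          have e1 : body i = mid 0 := by
            simp only [hbody]; rw [if_neg (by omega), if_pos (by omega)]
            congr 1; omega
          have e2 : body (i+1) = mid 1 := by
            simp only [hbody]; rw [if_neg (by omega), if_pos (by omega)]
            congr 1; omega
          rw [e1, e2]; exact hmidadj hq1
        · by_cases h4 : i ≤ K + q
          · -- i = K + q, i+1 = K+q+1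
            have e1 : body i = mid q := by
              simp only [hbody]; rw [if_neg (by omega), if_pos (by omega)]
              congr 1; omega
            have e2 : body (i+1) = chain G S B 0 := by
              simp only [hbody]; rw [if_neg (by omega), if_neg (by omega)]
              congr 1; omega
            rw [e1, e2, chain_zero]; exact hadjB
          · have e1 : body i = chain G S B (i - K - q - 1) := by
              simp only [hbody]; rw [if_neg (by omega), if_neg (by omega)]
            have e2 : body (i+1) = chain G S B (i - K - q) := by
              simp only [hbody]; rw [if_neg (by omega), if_neg (by omega)]
              congr 1; omega
            rw [e1, e2]
            have : i - K - q = (i - K - q - 1) + 1 := by omega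
            rw [this]
            exact chain_adj hP hτB (i - K - q - 1) (by omega)
  -- injectivity
  have hinj : ∀ a ≤ n, ∀ b ≤ n, body a = body b → a = b := by
    intro a ha b hb heq
    have htau_eq : tw a = tw b := by rw [← htau a ha, ← htau b hb, heq]
    by_cases h1 : a < K
    · by_cases h2 : b < K
      · simp only [htw, if_pos h1, if_pos h2] at htau_eq; omega
      · by_cases h3 : b ≤ K + q
        · simp only [htw, if_pos h1, if_neg (by omega : ¬ b < K), if_pos h3] at htau_eq
          omega
        · -- left-right at same level
          exfalso
          simp only [htw, if_pos h1, if_neg (by omega : ¬ b < K), if_neg h3] at htau_eq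
          have e1 : body a = chain G S F (K - 1 - a) := by simp only [hbody]; rw [if_pos h1]
          have e2 : body b = chain G S B (b - K - q - 1) := by
            simp only [hbody]; rw [if_neg (by omega), if_neg (by omega)]
          have hix : b - K - q - 1 = K - 1 - a := by omega
          rw [e1, e2, hix] at heq
          exact chains_disjoint hP hmax hτF hτB hFB (K - 1 - a) (by omega) heq
    · by_cases h3 : a ≤ K + q
      · by_cases h2 : b < K
        · simp only [htw, if_neg (by omega : ¬ a < K), if_pos h3, if_pos h2] at htau_eq
          omega
        · by_cases h4 : b ≤ K + q
          · -- both mid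
            by_contra hne
            have hq1 : q = 1 := by omega
            have : mid 0 = mid 1 := by
              have e1 : body a = mid (a - K) := by
                simp only [hbody]; rw [if_neg (by omega), if_pos h3]
              have e2 : body b = mid (b - K) := by
                simp only [hbody]; rw [if_neg (by omega), if_pos h4]
              rcases (by omega : a - K = 0 ∧ b - K = 1 ∨ a - K = 1 ∧ b - K = 0) with ⟨u1,u2⟩|⟨u1,u2⟩
              · rw [e1, e2, u1, u2] at heq; exact heq
              · rw [e1, e2, u1, u2] at heq; exact heq.symm
            exact (hmidadj hq1).ne this
          · simp only [htw, if_neg (by omega : ¬ a < K), if_pos h3,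
              if_neg (by omega : ¬ b < K), if_neg h4] at htau_eq
            omega
      · by_cases h2 : b < K
        · exfalso
          simp only [htw, if_neg (by omega : ¬ a < K), if_neg (by omega : ¬ a ≤ K + q),
            if_pos h2] at htau_eq
          have e1 : body b = chain G S F (K - 1 - b) := by simp only [hbody]; rw [if_pos h2]
          have e2 : body a = chain G S B (a - K - q - 1) := by
            simp only [hbody]; rw [if_neg (by omega), if_neg (by omega)]
          have hix : a - K - q - 1 = K - 1 - b := by omega
          rw [e1, e2, hix] at heq
          exact chains_disjoint hP hmax hτF hτB hFB (K - 1 - b) (by omega) heq.symm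
        · by_cases h4 : b ≤ K + q
          · simp only [htw, if_neg (by omega : ¬ a < K), if_neg (by omega : ¬ a ≤ K + q),
              if_neg (by omega : ¬ b < K), if_pos h4] at htau_eq
            omega
          · simp only [htw, if_neg (by omega : ¬ a < K), if_neg (by omega : ¬ a ≤ K + q),
              if_neg (by omega : ¬ b < K), if_neg h4] at htau_eq
            omega
  -- no chords
  have hnoadj : ∀ a, ∀ b ≤ n, a + 2 ≤ b → ¬ G.Adj (body a) (body b) := by
    intro a b hb hab hAdj
    have ha : a ≤ n := by omega
    -- uphill index for a chain-type position c
    have key : ∀ c ≤ n, ∀ d ≤ n, ∀ e ≤ n, d ≠ e →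
        G.Adj (body c) (body d) → G.Adj (body c) (body e) →
        tw c ≤ tw d → tw c ≤ tw e → False := by
      intro c hc d hd e he hde hcd hce h1 h2
      refine not_two_high hP hmax (u := body c) ?_ hcd hce ?_ ?_ ?_
      · rw [htau c hc]; exact htw_pos c hc
      · intro hbad; exact hde (hinj d hd e he hbad)
      · rw [htau c hc, htau d hd]; exact h1
      · rw [htau c hc, htau e he]; exact h2
    by_cases hcmp : tw a ≤ tw b
    · -- argue at a; a is chain type
      by_cases h1 : a < K
      · exact key a ha b hb (a+1) (by omega) (by omega) hAdj (hadj a (by omega)) hcmp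
          (by simp only [htw]; split_ifs <;> omega)
      · by_cases h2 : a ≤ K + q
        · -- a mid type: then b must be mid too: contradiction with gap
          have hbl : tw b ≤ K + 1 := by simp only [htw]; split_ifs <;> omega
          have hal : tw a = K + 1 := by simp only [htw]; rw [if_neg (by omega), if_pos h2]
          have hbm : ¬ b < K ∧ b ≤ K + q := by
            rw [hal] at hcmp
            by_cases hbK : b < K
            · have : tw b = b + 1 := by simp only [htw]; rw [if_pos hbK]
              omega
            · by_cases hb2 : b ≤ K + q
              · exact ⟨hbK, hb2⟩
              · have : tw b = 2*K + q + 1 - b := by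
                  simp only [htw]; rw [if_neg hbK, if_neg hb2]
                omega
          omega
        · -- a right type, uphill a-1
          exact key a ha b hb (a-1) (by omega) (by omega) hAdj
            (by
              have : a - 1 + 1 = a := by omega
              have h := hadj (a-1) (by omega)
              rw [this] at h; exact h.symm) hcmp
            (by simp only [htw]; split_ifs <;> omega)
    · push_neg at hcmp
      by_cases h1 : b < K
      · exact key b hb a ha (b+1) (by omega) (by omega) hAdj.symm (hadj b (by omega))
          (le_of_lt hcmp)
          (by simp only [htw]; split_ifs <;> omega)
      · by_cases h2 : b ≤ K + q
        · have hal : tw a ≤ K + 1 := by simp only [htw]; split_ifs <;> omega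
          have hbl : tw b = K + 1 := by simp only [htw]; rw [if_neg (by omega), if_pos h2]
          omega
        · exact key b hb a ha (b-1) (by omega) (by omega) hAdj.symm
            (by
              have : b - 1 + 1 = b := by omega
              have h := hadj (b-1) (by omega)
              rw [this] at h; exact h.symm)
            (le_of_lt hcmp)
            (by simp only [htw]; split_ifs <;> omega)
  -- degree three everywhere
  have hdeg : ∀ i ≤ n, G.degree (body i) = 3 := by
    intro i hi
    by_cases h1 : i < K
    · refine deg_three_of_high hP hmax ?_ (hadj i (by omega)) ?_
      · rw [htau i hi]; exact htw_pos i hi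
      · rw [htau i hi, htau (i+1) (by omega)]
        simp only [htw]; split_ifs <;> omega
    · by_cases h2 : i ≤ K + q
      · have : body i = mid (i - K) := by
          simp only [hbody]; rw [if_neg (by omega), if_pos h2]
        rw [this]; exact hmiddeg (i - K) (by omega)
      · refine deg_three_of_high hP hmax ?_
          (by
            have h := hadj (i-1) (by omega)
            have e : i - 1 + 1 = i := by omega
            rw [e] at h; exact h.symm) ?_
        · rw [htau i hi]; exact htw_pos i hi
        · rw [htau i hi, htau (i-1) (by omega)]
          simp only [htw]; split_ifs <;> omega
  -- assemble
  refine ⟨fun i => body i.1, ⟨?_, ?_⟩, ?_⟩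
  · intro a b hab
    exact Fin.ext (hinj a.1 (by omega) b.1 (by omega) hab)
  · intro i j
    constructor
    · intro hAdj
      by_contra hcon
      push_neg at hcon
      rcases lt_trichotomy i.1 j.1 with h | h | h
      · exact hnoadj i.1 j.1 (by omega) (by omega) hAdj
      · exact hAdj.ne (by rw [show i = j from Fin.ext h])
      · exact hnoadj j.1 i.1 (by omega) (by omega) hAdj.symm
    · rintro (h | h)
      · have := hadj i.1 (by omega)
        rwa [h] at this
      · have := hadj j.1 (by omega)
        rw [h] at this
        exact this.symm
  · intro i
    exact hdeg i.1 (by omega)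

/-- the path ending at the degree-2 summit -/
lemma caseB (hP : stage G S N = Set.univ) (hmax : ∀ v, G.degree v ≤ 3)
    {K : ℕ} (hK : 1 ≤ K) {v₀ F : V}
    (hτv : tau G S v₀ = K + 1) (hτF : tau G S F = K) (hadjF : G.Adj v₀ F) :
    K ∈ {n | ∃ w : Fin (n + 1) → V, IsInducedPath G w ∧ w 0 = v₀ ∧
      ∀ i : Fin (n + 1), i ≠ 0 → G.degree (w i) = 3} := by
  classical
  set body : ℕ → V := fun i => if i = 0 then v₀ else chain G S F (i - 1) with hbody
  set tw : ℕ → ℕ := fun i => if i = 0 then K + 1 else K + 1 - i with htw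
  have htau : ∀ i ≤ K, tau G S (body i) = tw i := by
    intro i hi
    by_cases h0 : i = 0
    · subst h0; simpa [hbody, htw] using hτv
    · simp only [hbody, htw, if_neg h0]
      rw [chain_tau hP hτF (i-1) (by omega)]; omega
  have htw_pos : ∀ i ≤ K, 1 ≤ tw i := by
    intro i hi; simp only [htw]; split_ifs <;> omega
  have hadj : ∀ i, i + 1 ≤ K → G.Adj (body i) (body (i+1)) := by
    intro i hi
    by_cases h0 : i = 0
    · subst h0
      have e1 : body 0 = v₀ := by simp [hbody]
      have e2 : body 1 = chain G S F 0 := by simp [hbody]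
      rw [e1, e2, chain_zero]; exact hadjF
    · have e1 : body i = chain G S F (i-1) := by simp only [hbody]; rw [if_neg h0]
      have e2 : body (i+1) = chain G S F (i-1+1) := by
        simp only [hbody]; rw [if_neg (by omega)]
        congr 1; omega
      rw [e1, e2]
      exact chain_adj hP hτF (i-1) (by omega)
  have hinj : ∀ a ≤ K, ∀ b ≤ K, body a = body b → a = b := by
    intro a ha b hb heq
    have : tw a = tw b := by rw [← htau a ha, ← htau b hb, heq]
    simp only [htw] at this
    split_ifs at this <;> omega
  have hnoadj : ∀ a, ∀ b ≤ K, a + 2 ≤ b → ¬ G.Adj (body a) (body b) := by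
    intro a b hb hab hAdj
    have ha : a ≤ K := by omega
    refine not_two_high hP hmax (u := body b) ?_ hAdj.symm
      (by
        have h := hadj (b-1) (by omega)
        have e : b - 1 + 1 = b := by omega
        rw [e] at h; exact h.symm) ?_ ?_ ?_
    · rw [htau b hb]; exact htw_pos b hb
    · intro hbad
      have := hinj a ha (b-1) (by omega) hbad
      omega
    · rw [htau b hb, htau a ha]; simp only [htw]; split_ifs <;> omega
    · rw [htau b hb, htau (b-1) (by omega)]; simp only [htw]; split_ifs <;> omega
  refine ⟨fun i => body i.1, ⟨?_, ?_⟩, by simp [hbody], ?_⟩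
  · intro a b hab
    exact Fin.ext (hinj a.1 (by omega) b.1 (by omega) hab)
  · intro i j
    constructor
    · intro hAdj
      by_contra hcon
      push_neg at hcon
      rcases lt_trichotomy i.1 j.1 with h | h | h
      · exact hnoadj i.1 j.1 (by omega) (by omega) hAdj
      · exact hAdj.ne (by rw [show i = j from Fin.ext h])
      · exact hnoadj j.1 i.1 (by omega) (by omega) hAdj.symm
    · rintro (h | h)
      · have := hadj i.1 (by omega)
        rwa [h] at this
      · have := hadj j.1 (by omega)
        rw [h] at this
        exact this.symm
  · intro i hi
    have h0 : i.1 ≠ 0 := fun h => hi (Fin.ext h)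
    refine deg_three_of_high hP hmax ?_
      (by
        have h := hadj (i.1-1) (by omega)
        have e : i.1 - 1 + 1 = i.1 := by omega
        rw [e] at h; exact h.symm) ?_
    · rw [htau i.1 (by omega)]; exact htw_pos i.1 (by omega)
    · rw [htau i.1 (by omega), htau (i.1-1) (by omega)]
      simp only [htw]; split_ifs <;> omega

/-- the master upper bound -/
lemma time_le {v₀ : V} (hmax : ∀ v, G.degree v ≤ 3)
    (hrest : ∀ v, v ≠ v₀ → G.degree v = 3) {ℓ m : ℕ}
    (hℓub : ∀ n ∈ {n | ∃ w : Fin (n + 1) → V, IsInducedPath G w ∧ w 0 = v₀ ∧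
      ∀ i : Fin (n + 1), i ≠ 0 → G.degree (w i) = 3}, n ≤ ℓ)
    (hmub : ∀ n ∈ {n | ∃ w : Fin (n + 1) → V, IsInducedPath G w ∧
      ∀ i, G.degree (w i) = 3}, n ≤ m)
    (S : Set V) (hS : ∃ t, stage G S t = Set.univ) :
    sInf {t | stage G S t = Set.univ} ≤ max (ℓ + 1) (m / 2 + 1) := by
  classical
  set k := sInf {t | stage G S t = Set.univ} with hk
  have hP : stage G S k = Set.univ := Nat.sInf_mem hS
  by_cases hk1 : k ≤ 1
  · have : k ≤ m / 2 + 1 := by omega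
    omega
  push_neg at hk1
  set K := k - 1 with hK
  have hKk : k = K + 1 := by omega
  have hK1 : 1 ≤ K := by omega
  -- find the last infected vertex
  have hnot : stage G S (k-1) ≠ Set.univ := by
    intro h
    have : k ≤ k - 1 := Nat.sInf_le h
    omega
  obtain ⟨v, hv⟩ := Set.ne_univ_iff_exists_notMem _ |>.1 hnot
  have hτv : tau G S v = K + 1 := by
    have h1 : tau G S v ≤ K + 1 := by rw [← hKk]; exact tau_le_N hP v
    have h2 : ¬ tau G S v ≤ K := by
      intro h
      exact hv ((mem_stage_iff hP).2 (by omega))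
    omega
  have hτle : ∀ u : V, tau G S u ≤ K + 1 := by
    intro u; rw [← hKk]; exact tau_le_N hP u
  by_cases hvv : v = v₀
  · -- degree-2 summit
    subst hvv
    obtain ⟨F, hadjF, hτF⟩ := exists_cause_exact hP hτv
    have := hℓub K (caseB hP hmax hK1 hτv hτF hadjF)
    omega
  · -- degree-3 summit
    have hdeg : G.degree v = 3 := hrest v hvv
    -- at most one neighbor infected before time K
    have hlowcard : ((G.neighborFinset v).filter (fun x => tau G S x + 1 ≤ K)).card ≤ 1 := by
      by_contra h
      have h' : 1 < ((G.neighborFinset v).filter (fun x => tau G S x + 1 ≤ K)).card := by omega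
      obtain ⟨a, ha, b, hb, hab⟩ := Finset.one_lt_card.1 h'
      simp only [Finset.mem_filter, mem_neighborFinset] at ha hb
      have := tau_le_of_two hP (r := K - 1) hab ha.1 hb.1 (by omega) (by omega)
      omega
    have hhighcard : 2 ≤ ((G.neighborFinset v).filter
        (fun x => ¬ (tau G S x + 1 ≤ K))).card := by
      have := Finset.card_filter_add_card_filter_not
        (s := G.neighborFinset v) (p := fun x => tau G S x + 1 ≤ K)
      rw [G.card_neighborFinset_eq_degree, hdeg] at this
      omega
    have h2' : 1 < ((G.neighborFinset v).filter
        (fun x => ¬ (tau G S x + 1 ≤ K))).card := by omega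
    obtain ⟨a, ha, b, hb, hab⟩ := Finset.one_lt_card.1 h2'
    simp only [Finset.mem_filter, mem_neighborFinset] at ha hb
    have hta : K ≤ tau G S a ∧ tau G S a ≤ K + 1 := ⟨by omega, hτle a⟩
    have htb : K ≤ tau G S b ∧ tau G S b ≤ K + 1 := ⟨by omega, hτle b⟩
    -- dispatch on the exact times of a and b
    have main : ∀ x z : V, G.Adj v x → G.Adj v z → x ≠ z →
        tau G S x = K → tau G S z = K + 1 → 2 * K ≤ m := by
      intro x z hax haz hxz hτx hτz
      -- z is a second summit
      have hz3 : G.degree z = 3 :=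
        deg_three_of_high hP hmax (by omega) haz.symm (by omega)
      obtain ⟨x', hadjx', hτx'⟩ := exists_cause_exact hP hτz
      have hxx' : x ≠ x' := by
        intro h
        subst h
        exact not_two_high hP hmax (u := x) (by omega) hax.symm hadjx'.symm
          (G.ne_of_adj haz) (by omega) (by omega)
      have hglue := glue hP hmax hK1 (le_refl 1)
        (fun i => if i = 0 then v else z) x x'
        (by
          intro i hi
          by_cases h : i = 0
          · subst h; simpa using hτv
          · have h1 : i = 1 := by omega
            subst h1; simpa using hτz)
        (fun _ => by simpa using haz)
        hτx hτx' hxx'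
        (by simpa using hax)
        (by simpa using hadjx')
        (by
          intro i hi
          by_cases h : i = 0
          · subst h; simpa using hdeg
          · have h1 : i = 1 := by omega
            subst h1; simpa using hz3)
      have := hmub (2*K + 1) hglue
      omega
    rcases (by omega : tau G S a = K ∨ tau G S a = K + 1) with h1 | h1 <;>
      rcases (by omega : tau G S b = K ∨ tau G S b = K + 1) with h2 | h2
    · -- both at K : single summit
      have hglue := glue hP hmax hK1 (by omega : (0:ℕ) ≤ 1)
        (fun _ => v) a b
        (by intro i hi; simpa using hτv)
        (by omega)
        h1 h2 hab ha.1 hb.1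
        (by intro i hi; simpa using hdeg)
      have := hmub (2*K + 0) hglue
      have : k ≤ m / 2 + 1 := by omega
      omega
    · have := main a b ha.1 hb.1 hab h1 h2
      have : k ≤ m / 2 + 1 := by omega
      omega
    · have := main b a hb.1 ha.1 (Ne.symm hab) h2 h1
      have : k ≤ m / 2 + 1 := by omega
      omega
    · exact (not_two_high hP hmax (u := v) (by omega) ha.1 hb.1 hab
        (by omega) (by omega)).elim

end Glue

section Lower
variable {V : Type} [Fintype V] [DecidableEq V] {G : SimpleGraph V} [DecidableRel G.Adj]

lemma four_nbrs {u a b c d : V} (ha : G.Adj u a) (hb : G.Adj u b) (hc : G.Adj u c)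
    (hd : G.Adj u d) (h1 : a ≠ b) (h2 : a ≠ c) (h3 : a ≠ d) (h4 : b ≠ c) (h5 : b ≠ d)
    (h6 : c ≠ d) : 4 ≤ G.degree u := by
  have hsub : ({a, b, c, d} : Finset V) ⊆ G.neighborFinset u := by
    intro x hx
    simp only [Finset.mem_insert, Finset.mem_singleton] at hx
    rcases hx with rfl | rfl | rfl | rfl <;> simp [mem_neighborFinset, ha, hb, hc, hd]
  have hcard : ({a, b, c, d} : Finset V).card = 4 := by
    rw [Finset.card_insert_of_notMem (by simp [h1, h2, h3]),
        Finset.card_insert_of_notMem (by simp [h4, h5]),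
        Finset.card_insert_of_notMem (by simp [h6]), Finset.card_singleton]
  calc 4 = ({a, b, c, d} : Finset V).card := hcard.symm
    _ ≤ (G.neighborFinset u).card := Finset.card_le_card hsub
    _ = G.degree u := G.card_neighborFinset_eq_degree u

lemma three_nbrs {u a b c : V} (ha : G.Adj u a) (hb : G.Adj u b) (hc : G.Adj u c)
    (h1 : a ≠ b) (h2 : a ≠ c) (h3 : b ≠ c) : 3 ≤ G.degree u := by
  have hsub : ({a, b, c} : Finset V) ⊆ G.neighborFinset u := by
    intro x hx
    simp only [Finset.mem_insert, Finset.mem_singleton] at hx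
    rcases hx with rfl | rfl | rfl <;> simp [mem_neighborFinset, ha, hb, hc]
  have hcard : ({a, b, c} : Finset V).card = 3 := by
    rw [Finset.card_insert_of_notMem (by simp [h1, h2]),
        Finset.card_insert_of_notMem (by simp [h3]), Finset.card_singleton]
  calc 3 = ({a, b, c} : Finset V).card := hcard.symm
    _ ≤ (G.neighborFinset u).card := Finset.card_le_card hsub
    _ = G.degree u := G.card_neighborFinset_eq_degree u

open scoped Classical in
/-- number of off-path neighbours is at least degree minus (number of admissible indices) -/
lemma off_card {n : ℕ} (w : Fin (n+1) → V) (hw : IsInducedPath G w) (j : Fin (n+1)) (c : ℕ)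
    (hfc : (Finset.univ.filter
      (fun t : Fin (n+1) => j.1 + 1 = t.1 ∨ t.1 + 1 = j.1)).card ≤ c) :
    G.degree (w j) ≤ ((G.neighborFinset (w j)).filter (fun x => x ∉ Set.range w)).card + c := by
  classical
  have hsplit := Finset.card_filter_add_card_filter_not
    (s := G.neighborFinset (w j)) (p := fun x => x ∉ Set.range w)
  have hon : ((G.neighborFinset (w j)).filter (fun x => ¬ x ∉ Set.range w)) ⊆
      (Finset.univ.filter
        (fun t : Fin (n+1) => j.1 + 1 = t.1 ∨ t.1 + 1 = j.1)).image w := by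
    intro x hx
    simp only [Finset.mem_filter, mem_neighborFinset, not_not] at hx
    obtain ⟨hadj, t, rfl⟩ := hx
    refine Finset.mem_image.2 ⟨t, Finset.mem_filter.2 ⟨Finset.mem_univ _, ?_⟩, rfl⟩
    exact (hw.2 j t).1 hadj
  have h1 : ((G.neighborFinset (w j)).filter (fun x => ¬ x ∉ Set.range w)).card ≤ c :=
    le_trans (Finset.card_le_card hon) (le_trans Finset.card_image_le hfc)
  rw [← G.card_neighborFinset_eq_degree]
  omega

lemma idx_card {n : ℕ} (j : Fin (n+1)) :
    (Finset.univ.filter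
      (fun t : Fin (n+1) => j.1 + 1 = t.1 ∨ t.1 + 1 = j.1)).card ≤ 2 := by
  have : (Finset.univ.filter
      (fun t : Fin (n+1) => j.1 + 1 = t.1 ∨ t.1 + 1 = j.1)).card ≤
      ({j.1 + 1, j.1 - 1} : Finset ℕ).card := by
    apply Finset.card_le_card_of_injOn Fin.val
    · intro t ht
      simp only [Finset.mem_coe, Finset.mem_filter] at ht
      simp only [Finset.mem_coe, Finset.mem_insert, Finset.mem_singleton]
      omega
    · intro x _ y _ h; exact Fin.ext h
  calc _ ≤ ({j.1 + 1, j.1 - 1} : Finset ℕ).card := this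
    _ ≤ ({j.1 - 1} : Finset ℕ).card + 1 := Finset.card_insert_le _ _
    _ ≤ 2 := by simp

lemma idx_card_end {n : ℕ} (j : Fin (n+1)) (hj : j.1 = 0 ∨ j.1 = n) :
    (Finset.univ.filter
      (fun t : Fin (n+1) => j.1 + 1 = t.1 ∨ t.1 + 1 = j.1)).card ≤ 1 := by
  have : (Finset.univ.filter
      (fun t : Fin (n+1) => j.1 + 1 = t.1 ∨ t.1 + 1 = j.1)).card ≤
      ({if j.1 = 0 then 1 else n - 1} : Finset ℕ).card := by
    apply Finset.card_le_card_of_injOn Fin.val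
    · intro t ht
      simp only [Finset.mem_coe, Finset.mem_filter] at ht
      simp only [Finset.mem_coe, Finset.mem_singleton]
      have := t.isLt
      rcases hj with h | h <;> split_ifs <;> omega
    · intro x _ y _ h; exact Fin.ext h
  simpa using this

end Lower

section LowerConstruct
variable {V : Type} [Fintype V] [DecidableEq V] {G : SimpleGraph V} [DecidableRel G.Adj]

open scoped Classical in
lemma lower_ell {v₀ : V} (hmax : ∀ v, G.degree v ≤ 3) (hv₀ : G.degree v₀ = 2)
    {ℓ : ℕ} (w : Fin (ℓ+1) → V) (hw : IsInducedPath G w) (h0 : w 0 = v₀)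
    (hdeg : ∀ i : Fin (ℓ+1), i ≠ 0 → G.degree (w i) = 3) :
    ∃ S : Set V, (∃ t, stage G S t = Set.univ) ∧
      sInf {t | stage G S t = Set.univ} = ℓ + 1 := by
  set S : Set V := {u | u ∉ Set.range w} with hS
  set X : ℕ → Set V := fun k =>
    {u | u ∉ Set.range w ∨ ∃ j : Fin (ℓ+1), u = w j ∧ ℓ + 1 ≤ j.1 + k} with hXdef
  have hwinj := hw.1
  have hdegj : ∀ j : Fin (ℓ+1), j.1 ≠ 0 → G.degree (w j) = 3 := by
    intro j hj; exact hdeg j (fun h => hj (by rw [h]; rfl))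
  have hdeg0 : ∀ j : Fin (ℓ+1), j.1 = 0 → G.degree (w j) = 2 := by
    intro j hj
    have : j = 0 := Fin.ext (by simpa using hj)
    rw [this, h0]; exact hv₀
  -- off-path neighbour count
  have hoff1 : ∀ j : Fin (ℓ+1),
      1 ≤ ((G.neighborFinset (w j)).filter (fun x => x ∉ Set.range w)).card := by
    intro j
    by_cases hj : j.1 = 0
    · have := off_card w hw j 1 (idx_card_end j (Or.inl hj))
      rw [hdeg0 j hj] at this; omega
    · have := off_card w hw j 2 (idx_card j)
      rw [hdegj j hj] at this; omega
  have hoff2 : ∀ j : Fin (ℓ+1), j.1 = ℓ →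
      2 ≤ ((G.neighborFinset (w j)).filter (fun x => x ∉ Set.range w)).card := by
    intro j hj
    by_cases hj0 : j.1 = 0
    · have := off_card w hw j 0 (by
        have := idx_card_end j (Or.inl hj0)
        have h2 : (Finset.univ.filter
            (fun t : Fin (ℓ+1) => j.1 + 1 = t.1 ∨ t.1 + 1 = j.1)) = ∅ := by
          apply Finset.eq_empty_of_forall_notMem
          intro t ht
          simp only [Finset.mem_filter] at ht
          have := t.isLt
          omega
        rw [h2]; simp)
      rw [hdeg0 j hj0] at this; omega
    · have := off_card w hw j 1 (idx_card_end j (Or.inr hj))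
      rw [hdegj j hj0] at this; omega
  have hXmem : ∀ (u : V) (k : ℕ), u ∈ X k ↔
      (u ∉ Set.range w ∨ ∃ j : Fin (ℓ+1), u = w j ∧ ℓ + 1 ≤ j.1 + k) := by
    intro u k; rfl
  -- the stage identification
  have hX : ∀ k, k ≤ ℓ + 1 → stage G S k = X k := by
    intro k
    induction k with
    | zero =>
      intro _
      ext u
      simp only [hXdef, hS, Set.mem_setOf_eq, stage]
      constructor
      · intro h; exact Or.inl h
      · rintro (h | ⟨j, rfl, hj⟩)
        · exact h
        · exact absurd hj (by have := j.isLt; omega)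
    | succ k ih =>
      intro hk
      have ihk := ih (by omega)
      show infectStep G (stage G S k) = X (k+1)
      rw [ihk]
      ext u
      simp only [infectStep, Set.mem_union, Set.mem_setOf_eq]
      constructor
      · rintro (hu | ⟨a, b, hab, hua, hub, haX, hbX⟩)
        · rcases (hXmem u k).1 hu with h | ⟨j, rfl, hj⟩
          · exact Or.inl h
          · exact Or.inr ⟨j, rfl, by omega⟩
        · by_cases hur : u ∈ Set.range w
          · obtain ⟨j, rfl⟩ := hur
            rw [hXmem]
            refine Or.inr ⟨j, rfl, ?_⟩
            by_contra hcon
            push_neg at hcon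
            have hcon' : j.1 + k + 1 ≤ ℓ := by omega
            -- neighbours in X k are off-path
            have hoffnbr : ∀ x, G.Adj (w j) x → x ∈ X k → x ∉ Set.range w := by
              intro x hadj hxX hxr
              obtain ⟨t, rfl⟩ := hxr
              have ht := (hw.2 j t).1 hadj
              rcases (hXmem _ k).1 hxX with h | ⟨j', hj', hge⟩
              · exact h (Set.mem_range_self t)
              · have : t = j' := hwinj hj'
                subst this
                omega
            have haS := hoffnbr a hua haX
            have hbS := hoffnbr b hub hbX
            by_cases hj0 : j.1 = 0
            · -- degree-2 vertex with path neighbour w 1 plus a,b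
              have hl1 : (1 : ℕ) < ℓ + 1 := by omega
              have hadj1 : G.Adj (w j) (w ⟨1, hl1⟩) := by
                apply (hw.2 j ⟨1, hl1⟩).2
                left; show j.1 + 1 = 1; omega
              have h3 := three_nbrs hua hub hadj1 hab
                (fun h => haS (h ▸ Set.mem_range_self _))
                (fun h => hbS (h ▸ Set.mem_range_self _))
              rw [hdeg0 j hj0] at h3; omega
            · -- interior vertex with two path neighbours plus a,b
              have hlm : j.1 - 1 < ℓ + 1 := by omega
              have hlp : j.1 + 1 < ℓ + 1 := by omega
              have hadjm : G.Adj (w j) (w ⟨j.1 - 1, hlm⟩) := by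
                apply (hw.2 j ⟨j.1 - 1, hlm⟩).2
                right; show (j.1 - 1) + 1 = j.1; omega
              have hadjp : G.Adj (w j) (w ⟨j.1 + 1, hlp⟩) := by
                apply (hw.2 j ⟨j.1 + 1, hlp⟩).2
                left; show j.1 + 1 = j.1 + 1; rfl
              have h4 := four_nbrs hua hub hadjm hadjp hab
                (fun h => haS (h ▸ Set.mem_range_self _))
                (fun h => haS (h ▸ Set.mem_range_self _))
                (fun h => hbS (h ▸ Set.mem_range_self _))
                (fun h => hbS (h ▸ Set.mem_range_self _))
                (by
                  intro h
                  have := hwinj h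
                  simp only [Fin.mk.injEq] at this
                  omega)
              have := hmax (w j)
              rw [hdegj j hj0] at h4; omega
          · exact Or.inl hur
      · intro hu
        rcases (hXmem u (k+1)).1 hu with h | ⟨j, rfl, hj⟩
        · exact Or.inl ((hXmem u k).2 (Or.inl h))
        · by_cases hin : ℓ + 1 ≤ j.1 + k
          · exact Or.inl ((hXmem _ k).2 (Or.inr ⟨j, rfl, hin⟩))
          · -- newly infected: j.1 + k = ℓ
            have hnew : j.1 + k = ℓ := by omega
            right
            by_cases hjl : j.1 = ℓ
            · -- two off-path neighbours
              obtain ⟨a, haf, b, hbf, hab⟩ := Finset.one_lt_card.1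
                (lt_of_lt_of_le one_lt_two (hoff2 j hjl))
              simp only [Finset.mem_filter, mem_neighborFinset] at haf hbf
              exact ⟨a, b, hab, haf.1, hbf.1,
                (hXmem a k).2 (Or.inl haf.2), (hXmem b k).2 (Or.inl hbf.2)⟩
            · -- path neighbour w (j+1) plus an off-path neighbour
              have hlp : j.1 + 1 < ℓ + 1 := by have := j.isLt; omega
              have hadjp : G.Adj (w j) (w ⟨j.1 + 1, hlp⟩) := by
                apply (hw.2 j ⟨j.1 + 1, hlp⟩).2
                left; show j.1 + 1 = j.1 + 1; rfl
              obtain ⟨o, hof⟩ := Finset.card_pos.1 (lt_of_lt_of_le zero_lt_one (hoff1 j))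
              simp only [Finset.mem_filter, mem_neighborFinset] at hof
              refine ⟨w ⟨j.1 + 1, hlp⟩, o, ?_, hadjp, hof.1, ?_, ?_⟩
              · intro h; exact hof.2 (h ▸ Set.mem_range_self _)
              · exact (hXmem _ k).2 (Or.inr ⟨⟨j.1 + 1, hlp⟩, rfl, by show ℓ + 1 ≤ j.1 + 1 + k; omega⟩)
              · exact (hXmem o k).2 (Or.inl hof.2)
  have hfull : stage G S (ℓ + 1) = Set.univ := by
    rw [hX (ℓ+1) le_rfl]
    ext u
    simp only [hXdef, Set.mem_setOf_eq, Set.mem_univ, iff_true]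
    by_cases hur : u ∈ Set.range w
    · obtain ⟨j, rfl⟩ := hur
      exact Or.inr ⟨j, rfl, by omega⟩
    · exact Or.inl hur
  have hne : ∀ k, k ≤ ℓ → stage G S k ≠ Set.univ := by
    intro k hk h
    have : w 0 ∈ X k := by rw [← hX k (by omega), h]; trivial
    rcases (hXmem _ k).1 this with h' | ⟨j, hj, hge⟩
    · exact h' (Set.mem_range_self _)
    · have : (0 : Fin (ℓ+1)) = j := hwinj hj
      subst this
      simp at hge
      omega
  refine ⟨S, ⟨ℓ+1, hfull⟩, ?_⟩
  have h1 : sInf {t | stage G S t = Set.univ} ≤ ℓ + 1 := Nat.sInf_le hfull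
  have h2 : stage G S (sInf {t | stage G S t = Set.univ}) = Set.univ :=
    Nat.sInf_mem (⟨ℓ+1, hfull⟩ : {t | stage G S t = Set.univ}.Nonempty)
  by_contra hcon
  exact hne _ (by omega) h2

open scoped Classical in
lemma lower_m (hmax : ∀ v, G.degree v ≤ 3)
    {m : ℕ} (w : Fin (m+1) → V) (hw : IsInducedPath G w)
    (hdeg : ∀ i : Fin (m+1), G.degree (w i) = 3) :
    ∃ S : Set V, (∃ t, stage G S t = Set.univ) ∧
      sInf {t | stage G S t = Set.univ} = m / 2 + 1 := by
  set S : Set V := {u | u ∉ Set.range w} with hS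
  set X : ℕ → Set V := fun k =>
    {u | u ∉ Set.range w ∨ ∃ j : Fin (m+1), u = w j ∧ (j.1 + 1 ≤ k ∨ m + 1 ≤ j.1 + k)}
    with hXdef
  have hwinj := hw.1
  have hoff1 : ∀ j : Fin (m+1),
      1 ≤ ((G.neighborFinset (w j)).filter (fun x => x ∉ Set.range w)).card := by
    intro j
    have := off_card w hw j 2 (idx_card j)
    rw [hdeg j] at this; omega
  have hoff2 : ∀ j : Fin (m+1), j.1 = 0 ∨ j.1 = m →
      2 ≤ ((G.neighborFinset (w j)).filter (fun x => x ∉ Set.range w)).card := by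
    intro j hj
    have := off_card w hw j 1 (idx_card_end j hj)
    rw [hdeg j] at this; omega
  have hXmem : ∀ (u : V) (k : ℕ), u ∈ X k ↔
      (u ∉ Set.range w ∨ ∃ j : Fin (m+1), u = w j ∧ (j.1 + 1 ≤ k ∨ m + 1 ≤ j.1 + k)) := by
    intro u k; rfl
  have hX : ∀ k, k ≤ m / 2 + 1 → stage G S k = X k := by
    intro k
    induction k with
    | zero =>
      intro _
      ext u
      simp only [hXdef, hS, Set.mem_setOf_eq, stage]
      constructor
      · intro h; exact Or.inl h
      · rintro (h | ⟨j, rfl, hj⟩)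
        · exact h
        · exact absurd hj (by have := j.isLt; omega)
    | succ k ih =>
      intro hk
      have ihk := ih (by omega)
      show infectStep G (stage G S k) = X (k+1)
      rw [ihk]
      ext u
      simp only [infectStep, Set.mem_union, Set.mem_setOf_eq]
      constructor
      · rintro (hu | ⟨a, b, hab, hua, hub, haX, hbX⟩)
        · rcases (hXmem u k).1 hu with h | ⟨j, rfl, hj⟩
          · exact Or.inl h
          · exact Or.inr ⟨j, rfl, by omega⟩
        · by_cases hur : u ∈ Set.range w
          · obtain ⟨j, rfl⟩ := hur
            rw [hXmem]
            refine Or.inr ⟨j, rfl, ?_⟩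
            by_contra hcon
            push_neg at hcon
            obtain ⟨hc1, hc2⟩ := hcon
            have hcj : k + 1 ≤ j.1 ∧ j.1 + k + 1 ≤ m := by omega
            have hoffnbr : ∀ x, G.Adj (w j) x → x ∈ X k → x ∉ Set.range w := by
              intro x hadj hxX hxr
              obtain ⟨t, rfl⟩ := hxr
              have ht := (hw.2 j t).1 hadj
              rcases (hXmem _ k).1 hxX with h | ⟨j', hj', hge⟩
              · exact h (Set.mem_range_self t)
              · have : t = j' := hwinj hj'
                subst this
                omega
            have haS := hoffnbr a hua haX
            have hbS := hoffnbr b hub hbX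
            have hlm : j.1 - 1 < m + 1 := by omega
            have hlp : j.1 + 1 < m + 1 := by omega
            have hadjm : G.Adj (w j) (w ⟨j.1 - 1, hlm⟩) := by
              apply (hw.2 j ⟨j.1 - 1, hlm⟩).2
              right; show (j.1 - 1) + 1 = j.1; omega
            have hadjp : G.Adj (w j) (w ⟨j.1 + 1, hlp⟩) := by
              apply (hw.2 j ⟨j.1 + 1, hlp⟩).2
              left; show j.1 + 1 = j.1 + 1; rfl
            have h4 := four_nbrs hua hub hadjm hadjp hab
              (fun h => haS (h ▸ Set.mem_range_self _))
              (fun h => haS (h ▸ Set.mem_range_self _))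
              (fun h => hbS (h ▸ Set.mem_range_self _))
              (fun h => hbS (h ▸ Set.mem_range_self _))
              (by
                intro h
                have := hwinj h
                simp only [Fin.mk.injEq] at this
                omega)
            rw [hdeg j] at h4; omega
          · exact Or.inl hur
      · intro hu
        rcases (hXmem u (k+1)).1 hu with h | ⟨j, rfl, hj⟩
        · exact Or.inl ((hXmem u k).2 (Or.inl h))
        · by_cases hin : j.1 + 1 ≤ k ∨ m + 1 ≤ j.1 + k
          · exact Or.inl ((hXmem _ k).2 (Or.inr ⟨j, rfl, hin⟩))
          · push_neg at hin
            obtain ⟨hin1, hin2⟩ := hin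
            right
            by_cases hend : j.1 = 0 ∨ j.1 = m
            · -- an endpoint: two off-path neighbours
              obtain ⟨a, haf, b, hbf, hab⟩ := Finset.one_lt_card.1
                (lt_of_lt_of_le one_lt_two (hoff2 j hend))
              simp only [Finset.mem_filter, mem_neighborFinset] at haf hbf
              exact ⟨a, b, hab, haf.1, hbf.1,
                (hXmem a k).2 (Or.inl haf.2), (hXmem b k).2 (Or.inl hbf.2)⟩
            · push_neg at hend
              obtain ⟨o, hof⟩ := Finset.card_pos.1 (lt_of_lt_of_le zero_lt_one (hoff1 j))
              simp only [Finset.mem_filter, mem_neighborFinset] at hof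
              rcases hj with hj | hj
              · -- infected from the left: j = k, use w (j-1)
                have hjk : j.1 = k := by omega
                have hlm : j.1 - 1 < m + 1 := by omega
                have hadjm : G.Adj (w j) (w ⟨j.1 - 1, hlm⟩) := by
                  apply (hw.2 j ⟨j.1 - 1, hlm⟩).2
                  right; show (j.1 - 1) + 1 = j.1; omega
                refine ⟨w ⟨j.1 - 1, hlm⟩, o, ?_, hadjm, hof.1, ?_, ?_⟩
                · intro h; exact hof.2 (h ▸ Set.mem_range_self _)
                · exact (hXmem _ k).2 (Or.inr ⟨⟨j.1 - 1, hlm⟩, rfl,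
                    Or.inl (by show (j.1 - 1) + 1 ≤ k; omega)⟩)
                · exact (hXmem o k).2 (Or.inl hof.2)
              · -- infected from the right: j + k = m, use w (j+1)
                have hjk : j.1 + k = m := by omega
                have hlp : j.1 + 1 < m + 1 := by omega
                have hadjp : G.Adj (w j) (w ⟨j.1 + 1, hlp⟩) := by
                  apply (hw.2 j ⟨j.1 + 1, hlp⟩).2
                  left; show j.1 + 1 = j.1 + 1; rfl
                refine ⟨w ⟨j.1 + 1, hlp⟩, o, ?_, hadjp, hof.1, ?_, ?_⟩
                · intro h; exact hof.2 (h ▸ Set.mem_range_self _)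
                · exact (hXmem _ k).2 (Or.inr ⟨⟨j.1 + 1, hlp⟩, rfl,
                    Or.inr (by show m + 1 ≤ (j.1 + 1) + k; omega)⟩)
                · exact (hXmem o k).2 (Or.inl hof.2)
  have hfull : stage G S (m / 2 + 1) = Set.univ := by
    rw [hX (m/2+1) le_rfl]
    ext u
    simp only [hXdef, Set.mem_setOf_eq, Set.mem_univ, iff_true]
    by_cases hur : u ∈ Set.range w
    · obtain ⟨j, rfl⟩ := hur
      exact Or.inr ⟨j, rfl, by have := j.isLt; omega⟩
    · exact Or.inl hur
  have hne : ∀ k, k ≤ m / 2 → stage G S k ≠ Set.univ := by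
    intro k hk h
    have hmid : (m / 2 : ℕ) < m + 1 := by omega
    have : w ⟨m/2, hmid⟩ ∈ X k := by rw [← hX k (by omega), h]; trivial
    rcases (hXmem _ k).1 this with h' | ⟨j, hj, hge⟩
    · exact h' (Set.mem_range_self _)
    · have : (⟨m/2, hmid⟩ : Fin (m+1)) = j := hwinj hj
      subst this
      simp only at hge
      rcases hge with hge | hge
      · have : (⟨m/2, hmid⟩ : Fin (m+1)).1 = m / 2 := rfl
        omega
      · have : (⟨m/2, hmid⟩ : Fin (m+1)).1 = m / 2 := rfl
        omega
  refine ⟨S, ⟨m/2+1, hfull⟩, ?_⟩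
  have h1 : sInf {t | stage G S t = Set.univ} ≤ m / 2 + 1 := Nat.sInf_le hfull
  have h2 : stage G S (sInf {t | stage G S t = Set.univ}) = Set.univ :=
    Nat.sInf_mem (⟨m/2+1, hfull⟩ : {t | stage G S t = Set.univ}.Nonempty)
  by_contra hcon
  exact hne _ (by omega) h2

end LowerConstruct

end BP

theorem stmt15 {V : Type} [Fintype V] [DecidableEq V] (G : SimpleGraph V) [DecidableRel G.Adj]
    (hconn : G.Connected) (hmax : ∀ v, G.degree v ≤ 3)
    (v₀ : V) (hv₀ : G.degree v₀ = 2) (hrest : ∀ v, v ≠ v₀ → G.degree v = 3)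
    (ℓ m : ℕ)
    (hℓ : IsGreatest {n | ∃ w : Fin (n + 1) → V, IsInducedPath G w ∧ w 0 = v₀ ∧
      ∀ i : Fin (n + 1), i ≠ 0 → G.degree (w i) = 3} ℓ)
    (hm : IsGreatest {n | ∃ w : Fin (n + 1) → V, IsInducedPath G w ∧
      ∀ i, G.degree (w i) = 3} m) :
    maxTime G = max (ℓ + 1) (m / 2 + 1) := by
  classical
  have hub : ∀ t ∈ {t | ∃ S : Set V, Percolates G S ∧ percTime G S = t},
      t ≤ max (ℓ + 1) (m / 2 + 1) := by
    rintro t ⟨S, hSperc, rfl⟩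
    exact BP.time_le hmax hrest (fun n hn => hℓ.2 hn) (fun n hn => hm.2 hn) S hSperc
  obtain ⟨w1, hw1, h01, hd1⟩ := hℓ.1
  obtain ⟨S₁, hS₁p, hS₁t⟩ := BP.lower_ell hmax hv₀ w1 hw1 h01 hd1
  obtain ⟨w2, hw2, hd2⟩ := hm.1
  obtain ⟨S₂, hS₂p, hS₂t⟩ := BP.lower_m hmax w2 hw2 hd2
  have hmem1 : (ℓ + 1) ∈ {t | ∃ S : Set V, Percolates G S ∧ percTime G S = t} :=
    ⟨S₁, hS₁p, hS₁t⟩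
  have hmem2 : (m / 2 + 1) ∈ {t | ∃ S : Set V, Percolates G S ∧ percTime G S = t} :=
    ⟨S₂, hS₂p, hS₂t⟩
  have hbdd : BddAbove {t | ∃ S : Set V, Percolates G S ∧ percTime G S = t} :=
    ⟨max (ℓ + 1) (m / 2 + 1), fun t ht => hub t ht⟩
  apply le_antisymm
  · exact csSup_le ⟨_, hmem1⟩ hub
  · exact max_le (le_csSup hbdd hmem1) (le_csSup hbdd hmem2)
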